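/- arXiv:2002.01108 — 2 statements merged into one kernel-verified Lean document; each statement's English description precedes it below -/
import Mathlib

section
/- For every ε ∈ (0,1] and N ≥ 2, the spectrum (over ℂ) of P_ε⁻¹L equals {1} ∪ σ(I_J + ε((M⁻¹A₀)^N − εI_J)⁻¹). -/
open Matrix

/-- The all-at-once block lower bidiagonal matrix `L` whose `(i,j)`-th `J × J`
block equals `A₀` if `i = j`, `−M` if `i = j + 1`, and `0` otherwise. -/
def Lmat (N J : ℕ) (A₀ M : Matrix (Fin J) (Fin J) ℝ) :
    Matrix (Fin N × Fin J) (Fin N × Fin J) ℝ :=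
  Matrix.of fun p q =>
    if p.1 = q.1 then A₀ p.2 q.2
    else if (p.1 : ℕ) = (q.1 : ℕ) + 1 then -M p.2 q.2 else 0

/-- `E_i = e_i ⊗ I_J`, where `e_i` is the `i`-th standard basis vector of `ℝ^N`. -/
def Emat (N J : ℕ) (i : Fin N) : Matrix (Fin N × Fin J) (Fin J) ℝ :=
  Matrix.of fun p y => if p.1 = i ∧ p.2 = y then 1 else 0

/-- The block `ε`-circulant preconditioner `P_ε`, agreeing with `L` in every
block except that the top-right `(1,N)`-th `J × J` block equals `−εM`;
equivalently `P_ε = L − ε E₁ M E_Nᵀ`. -/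
noncomputable def Pmat (N J : ℕ) (hN : 0 < N) (A₀ M : Matrix (Fin J) (Fin J) ℝ)
    (ε : ℝ) : Matrix (Fin N × Fin J) (Fin N × Fin J) ℝ :=
  Lmat N J A₀ M -
    ε • (Emat N J ⟨0, hN⟩ * M * (Emat N J ⟨N - 1, Nat.sub_lt hN Nat.one_pos⟩)ᵀ)

section Helpers

variable {J : ℕ}

private lemma myPosDef_smul {c : ℝ} {K : Matrix (Fin J) (Fin J) ℝ} (hK : K.PosDef)
    (hc : 0 < c) : (c • K).PosDef := by
  refine posDef_iff_dotProduct_mulVec.2 ⟨?_, fun x hx => ?_⟩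
  · rw [IsHermitian, conjTranspose_eq_transpose_of_trivial, transpose_smul,
      ← conjTranspose_eq_transpose_of_trivial, hK.1.eq]
  · rw [smul_mulVec, dotProduct_smul, smul_eq_mul]
    exact mul_pos hc ((posDef_iff_dotProduct_mulVec.1 hK).2 hx)

private lemma myPosSemidef_smul {c : ℝ} {K : Matrix (Fin J) (Fin J) ℝ} (hK : K.PosSemidef)
    (hc : 0 ≤ c) : (c • K).PosSemidef := by
  refine posSemidef_iff_dotProduct_mulVec.2 ⟨?_, fun x => ?_⟩
  · rw [IsHermitian, conjTranspose_eq_transpose_of_trivial, transpose_smul]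
    rw [← conjTranspose_eq_transpose_of_trivial, hK.1.eq]
  · rw [smul_mulVec, dotProduct_smul, smul_eq_mul]
    exact mul_nonneg hc ((posSemidef_iff_dotProduct_mulVec.1 hK).2 x)

private lemma myPosSemidef_conj {A C : Matrix (Fin J) (Fin J) ℝ} (hA : A.PosSemidef) :
    (Cᵀ * A * C).PosSemidef := by
  have := hA.conjTranspose_mul_mul_same C
  rwa [conjTranspose_eq_transpose_of_trivial] at this

private lemma myPosDef_conj {A C : Matrix (Fin J) (Fin J) ℝ} (hA : A.PosDef)
    (hC : IsUnit C.det) : (Cᵀ * A * C).PosDef := by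
  refine posDef_iff_dotProduct_mulVec.2 ⟨?_, fun x hx => ?_⟩
  · have := (hA.posSemidef.conjTranspose_mul_mul_same C).1
    rwa [conjTranspose_eq_transpose_of_trivial] at this
  · have hinj : Function.Injective C.mulVec := mulVec_injective_iff_isUnit.2
      (Matrix.isUnit_iff_isUnit_det C |>.2 hC)
    have hCx : C *ᵥ x ≠ 0 := fun h => hx (hinj (h.trans (Matrix.mulVec_zero C).symm))
    have key : star x ⬝ᵥ ((Cᵀ * A * C) *ᵥ x) = star (C *ᵥ x) ⬝ᵥ (A *ᵥ (C *ᵥ x)) := by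
      simp only [star_trivial, ← mulVec_mulVec, dotProduct_mulVec, vecMul_transpose]
    rw [key]
    exact (posDef_iff_dotProduct_mulVec.1 hA).2 hCx

private lemma bigPosDef (N : ℕ) (hN : 0 < N)
    (τ : ℝ) (hτ : 0 < τ)
    (M K : Matrix (Fin J) (Fin J) ℝ) (hM : M.PosDef) (hK : K.PosDef)
    (A₀ : Matrix (Fin J) (Fin J) ℝ) (hA₀ : A₀ = M + τ • K)
    (ε : ℝ) (hε0 : 0 < ε) (hε1 : ε ≤ 1) :
    (M * (M⁻¹ * A₀) ^ N - ε • M).PosDef := by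
  set S := M⁻¹ * A₀ with hS
  have hA₀pd : A₀.PosDef := by rw [hA₀]; exact hM.add (myPosDef_smul hK hτ)
  have hMdet : IsUnit M.det := hM.det_pos.ne'.isUnit
  have hAdet : IsUnit A₀.det := hA₀pd.det_pos.ne'.isUnit
  have hMM : M * M⁻¹ = 1 := mul_nonsing_inv M hMdet
  have hMM' : M⁻¹ * M = 1 := nonsing_inv_mul M hMdet
  have hMc : ∀ X : Matrix (Fin J) (Fin J) ℝ, M * (M⁻¹ * X) = X := fun X => by
    rw [← Matrix.mul_assoc, hMM, Matrix.one_mul]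
  have hMc' : ∀ X : Matrix (Fin J) (Fin J) ℝ, M⁻¹ * (M * X) = X := fun X => by
    rw [← Matrix.mul_assoc, hMM', Matrix.one_mul]
  have hMt : Mᵀ = M := by
    rw [← conjTranspose_eq_transpose_of_trivial, hM.1.eq]
  have hAt : A₀ᵀ = A₀ := by
    rw [← conjTranspose_eq_transpose_of_trivial, hA₀pd.1.eq]
  have hKt : Kᵀ = K := by
    rw [← conjTranspose_eq_transpose_of_trivial, hK.1.eq]
  have hMit : (M⁻¹)ᵀ = M⁻¹ := by rw [transpose_nonsing_inv, hMt]
  have hSt : Sᵀ = A₀ * M⁻¹ := by rw [hS, transpose_mul, hMit, hAt]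
  have hSdet : IsUnit S.det := by
    rw [hS, det_mul, det_nonsing_inv, Ring.inverse_eq_inv]
    exact isUnit_iff_ne_zero.2
      (mul_ne_zero (inv_ne_zero hM.det_pos.ne') hA₀pd.det_pos.ne')
  have eMS1 : M * S = A₀ := by
    rw [hS, ← Matrix.mul_assoc, hMM, Matrix.one_mul]
  have hconj : ∀ i : ℕ, (S ^ i)ᵀ * M = M * S ^ i := by
    intro i
    induction i with
    | zero => simp
    | succ i ih =>
      rw [pow_succ, transpose_mul, Matrix.mul_assoc, ih, hSt,
        Matrix.mul_assoc A₀ M⁻¹ (M * S ^ i), hMc' (S ^ i), ← pow_succ, pow_succ',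
        ← Matrix.mul_assoc, eMS1]
  have hsand : ∀ m k : ℕ, (S ^ m)ᵀ * (M * S ^ k) * S ^ m = M * S ^ (k + 2 * m) := by
    intro m k
    rw [← Matrix.mul_assoc ((S ^ m)ᵀ) M (S ^ k), hconj m,
      Matrix.mul_assoc M (S ^ m) (S ^ k), ← pow_add,
      Matrix.mul_assoc M (S ^ (m + k)) (S ^ m), ← pow_add,
      show m + k + m = k + 2 * m by ring]
  have hsand2 : ∀ m k l : ℕ, (S ^ m)ᵀ * (M * S ^ k - M * S ^ l) * S ^ m
      = M * S ^ (k + 2 * m) - M * S ^ (l + 2 * m) := by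
    intro m k l
    rw [Matrix.mul_sub, Matrix.sub_mul, hsand, hsand]
  have eMS2 : M * S ^ 2 = A₀ * (M⁻¹ * A₀) := by
    rw [pow_two, ← Matrix.mul_assoc, eMS1, hS]
  have eMS3 : M * S ^ 3 = A₀ * (M⁻¹ * (A₀ * (M⁻¹ * A₀))) := by
    rw [pow_succ, ← Matrix.mul_assoc, eMS2, hS,
      Matrix.mul_assoc A₀ (M⁻¹ * A₀) (M⁻¹ * A₀),
      Matrix.mul_assoc M⁻¹ A₀ (M⁻¹ * A₀)]
  have hKMK : (K * (M⁻¹ * K)).PosSemidef := by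
    have := myPosSemidef_conj (C := K) hM.inv.posSemidef
    rwa [hKt, Matrix.mul_assoc] at this
  have hKMKMK : (K * (M⁻¹ * (K * (M⁻¹ * K)))).PosSemidef := by
    have := myPosSemidef_conj (C := M⁻¹ * K) hK.posSemidef
    rw [transpose_mul, hKt, hMit] at this
    rwa [Matrix.mul_assoc, Matrix.mul_assoc] at this
  -- middle identities
  have mid1 : M * S ^ 1 - M * S ^ 0 = τ • K := by
    rw [pow_one, pow_zero, Matrix.mul_one, eMS1, hA₀]; abel
  have mid2 : M * S ^ 2 - M * S ^ 0 = (2 * τ) • K + (τ * τ) • (K * (M⁻¹ * K)) := by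
    rw [pow_zero, Matrix.mul_one, eMS2, hA₀]
    simp only [Matrix.mul_add, Matrix.add_mul, Matrix.mul_smul, Matrix.smul_mul,
      smul_smul, smul_add, Matrix.mul_assoc, hMc, hMc', hMM, hMM', Matrix.mul_one, Matrix.one_mul]
    module
  have mid21 : M * S ^ 2 - M * S ^ 1 = τ • K + (τ * τ) • (K * (M⁻¹ * K)) := by
    rw [pow_one, eMS2, eMS1, hA₀]
    simp only [Matrix.mul_add, Matrix.add_mul, Matrix.mul_smul, Matrix.smul_mul,
      smul_smul, smul_add, Matrix.mul_assoc, hMc, hMc', hMM, hMM', Matrix.mul_one, Matrix.one_mul]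
    module
  have mid3 : M * S ^ 3 - M * S ^ 1 = (2 * τ) • K + (3 * (τ * τ)) • (K * (M⁻¹ * K))
      + (τ * τ * τ) • (K * (M⁻¹ * (K * (M⁻¹ * K)))) := by
    rw [pow_one, eMS3, eMS1, hA₀]
    simp only [Matrix.mul_add, Matrix.add_mul, Matrix.mul_smul, Matrix.smul_mul,
      smul_smul, smul_add, Matrix.mul_assoc, hMc, hMc', hMM, hMM', Matrix.mul_one, Matrix.one_mul]
    module
  -- psd of middles
  have mid2psd : (M * S ^ 2 - M * S ^ 0).PosSemidef := by
    rw [mid2]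
    exact (myPosSemidef_smul hK.posSemidef (by linarith)).add
      (myPosSemidef_smul hKMK (mul_self_nonneg τ))
  have mid3psd : (M * S ^ 3 - M * S ^ 1).PosSemidef := by
    rw [mid3]
    exact ((myPosSemidef_smul hK.posSemidef (by linarith)).add
      (myPosSemidef_smul hKMK (by positivity))).add
      (myPosSemidef_smul hKMKMK (by positivity))
  have mid1pd : (M * S ^ 1 - M * S ^ 0).PosDef := by
    rw [mid1]; exact myPosDef_smul hK hτ
  have mid21pd : (M * S ^ 2 - M * S ^ 1).PosDef := by
    rw [mid21]
    exact (myPosDef_smul hK hτ).add_posSemidef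
      (myPosSemidef_smul hKMK (mul_self_nonneg τ))
  -- Q n : psd of M S^n - M
  have Q : ∀ n : ℕ, (M * S ^ n - M).PosSemidef := by
    intro n
    induction n using Nat.twoStepInduction with
    | zero => simp only [pow_zero, Matrix.mul_one, sub_self]; exact Matrix.PosSemidef.zero
    | one =>
      have : M * S ^ 1 - M = τ • K := by
        rw [pow_one, eMS1, hA₀]; abel
      rw [this]; exact myPosSemidef_smul hK.posSemidef hτ.le
    | more n ih _ =>
      have key : M * S ^ (n + 2) - M = (M * S ^ (n + 2) - M * S ^ n) + (M * S ^ n - M) :=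
        (sub_add_sub_cancel _ _ _).symm
      rw [key]
      refine Matrix.PosSemidef.add ?_ ih
      rcases Nat.even_or_odd n with ⟨m, hm⟩ | ⟨m, hm⟩
      · have h := myPosSemidef_conj (C := S ^ m) mid2psd
        rw [hsand2 m 2 0] at h
        rwa [show n + 2 = 2 + 2 * m by omega, show n = 0 + 2 * m by omega]
      · have h := myPosSemidef_conj (C := S ^ m) mid3psd
        rw [hsand2 m 3 1] at h
        rwa [show n + 2 = 3 + 2 * m by omega, show n = 1 + 2 * m by omega]
  -- last step posdef
  have laststep : ∀ n : ℕ, (M * S ^ (n + 1) - M * S ^ n).PosDef := by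
    intro n
    have hSm : ∀ m : ℕ, IsUnit (S ^ m).det := fun m => by
      rw [det_pow]; exact hSdet.pow m
    rcases Nat.even_or_odd n with ⟨m, hm⟩ | ⟨m, hm⟩
    · have h := myPosDef_conj (C := S ^ m) mid1pd (hSm m)
      rw [hsand2 m 1 0] at h
      rwa [show n + 1 = 1 + 2 * m by omega, show n = 0 + 2 * m by omega]
    · have h := myPosDef_conj (C := S ^ m) mid21pd (hSm m)
      rw [hsand2 m 2 1] at h
      rwa [show n + 1 = 2 + 2 * m by omega, show n = 1 + 2 * m by omega]
  obtain ⟨n, rfl⟩ : ∃ n, N = n + 1 := ⟨N - 1, by omega⟩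
  have heq : M * S ^ (n + 1) - ε • M
      = (M * S ^ (n + 1) - M * S ^ n) + ((M * S ^ n - M) + (1 - ε) • M) := by
    module
  rw [heq]
  exact (laststep n).add_posSemidef ((Q n).add
    (myPosSemidef_smul hM.posSemidef (by linarith)))


-- transfer lemmas along `Complex.ofReal`
section CMap

lemma cmap_mul {nr nc nk : Type*} [Fintype nc] (X : Matrix nr nc ℝ) (Y : Matrix nc nk ℝ) :
    (X * Y).map Complex.ofReal = X.map Complex.ofReal * Y.map Complex.ofReal :=
  Matrix.map_mul (f := Complex.ofRealHom)

lemma cmap_one {n : Type*} [Fintype n] [DecidableEq n] :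
    (1 : Matrix n n ℝ).map Complex.ofReal = 1 :=
  Matrix.map_one Complex.ofReal Complex.ofReal_zero Complex.ofReal_one

lemma cmap_sub {nr nc : Type*} (X Y : Matrix nr nc ℝ) :
    (X - Y).map Complex.ofReal = X.map Complex.ofReal - Y.map Complex.ofReal := by
  ext i j; simp [Matrix.map_apply]

lemma cmap_add {nr nc : Type*} (X Y : Matrix nr nc ℝ) :
    (X + Y).map Complex.ofReal = X.map Complex.ofReal + Y.map Complex.ofReal := by
  ext i j; simp [Matrix.map_apply]

lemma cmap_smul {nr nc : Type*} (c : ℝ) (X : Matrix nr nc ℝ) :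
    (c • X).map Complex.ofReal = (c : ℂ) • X.map Complex.ofReal := by
  ext i j; simp [Matrix.map_apply]

lemma cmap_transpose {nr nc : Type*} (X : Matrix nr nc ℝ) :
    (Xᵀ).map Complex.ofReal = (X.map Complex.ofReal)ᵀ := rfl

lemma cmap_pow {n : Type*} [Fintype n] [DecidableEq n] (X : Matrix n n ℝ) (k : ℕ) :
    (X ^ k).map Complex.ofReal = (X.map Complex.ofReal) ^ k := by
  induction k with
  | zero => simpa using cmap_one
  | succ k ih => rw [pow_succ, cmap_mul, ih, pow_succ]

lemma cmap_det {n : Type*} [Fintype n] [DecidableEq n] (X : Matrix n n ℝ) :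
    (X.map Complex.ofReal).det = Complex.ofReal X.det :=
  (RingHom.map_det Complex.ofRealHom X).symm

lemma cmap_inv {n : Type*} [Fintype n] [DecidableEq n] (X : Matrix n n ℝ)
    (h : IsUnit X.det) :
    (X⁻¹).map Complex.ofReal = (X.map Complex.ofReal)⁻¹ := by
  have h1 : X.map Complex.ofReal * (X⁻¹).map Complex.ofReal = 1 := by
    rw [← cmap_mul, mul_nonsing_inv _ h, cmap_one]
  exact (inv_eq_right_inv h1).symm

end CMap

end Helpers

namespace Stmt9

def LC (N J : ℕ) (A B : Matrix (Fin J) (Fin J) ℂ) :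
    Matrix (Fin N × Fin J) (Fin N × Fin J) ℂ :=
  Matrix.of fun p q =>
    if p.1 = q.1 then A p.2 q.2
    else if (p.1 : ℕ) = (q.1 : ℕ) + 1 then -B p.2 q.2 else 0

def EC (N J : ℕ) (i : Fin N) : Matrix (Fin N × Fin J) (Fin J) ℂ :=
  Matrix.of fun p y => if p.1 = i ∧ p.2 = y then 1 else 0

noncomputable def Blk (N J : ℕ) (A B : Matrix (Fin J) (Fin J) ℂ) (k j : Fin N) :
    Matrix (Fin J) (Fin J) ℂ :=
  if (j : ℕ) ≤ (k : ℕ) then (A⁻¹ * B) ^ ((k : ℕ) - (j : ℕ)) * A⁻¹ else 0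

noncomputable def LinvC (N J : ℕ) (A B : Matrix (Fin J) (Fin J) ℂ) :
    Matrix (Fin N × Fin J) (Fin N × Fin J) ℂ :=
  Matrix.of fun p q => Blk N J A B p.1 q.1 p.2 q.2

lemma map_Lmat (N J : ℕ) (A B : Matrix (Fin J) (Fin J) ℝ) :
    (Lmat N J A B).map Complex.ofReal = LC N J (A.map Complex.ofReal) (B.map Complex.ofReal) := by
  ext ⟨i, x⟩ ⟨j, y⟩
  simp only [Lmat, LC, Matrix.map_apply, Matrix.of_apply, apply_ite Complex.ofReal,
    Complex.ofReal_neg, Complex.ofReal_zero]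

lemma map_Emat (N J : ℕ) (i : Fin N) :
    (Emat N J i).map Complex.ofReal = EC N J i := by
  ext ⟨k, x⟩ y
  simp only [Emat, EC, Matrix.map_apply, Matrix.of_apply, apply_ite Complex.ofReal,
    Complex.ofReal_one, Complex.ofReal_zero]

lemma ECt_mul {N J : ℕ} (i : Fin N) (X : Matrix (Fin N × Fin J) (Fin N × Fin J) ℂ) :
    (EC N J i)ᵀ * X = Matrix.of fun y q => X (i, y) q := by
  ext y q
  rw [Matrix.mul_apply, Fintype.sum_prod_type]
  simp [EC, transpose_apply, ite_and, ite_mul, Finset.sum_ite_eq, Finset.sum_ite_eq']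

lemma mul_EC' {N J : ℕ} (j : Fin N) (Y : Matrix (Fin J) (Fin N × Fin J) ℂ) :
    Y * EC N J j = Matrix.of fun y z => Y y (j, z) := by
  ext y z
  rw [Matrix.mul_apply, Fintype.sum_prod_type]
  simp [EC, ite_and, mul_ite, Finset.sum_ite_eq, Finset.sum_ite_eq']

lemma LC_mul_LinvC {N J : ℕ} (A B : Matrix (Fin J) (Fin J) ℂ) (hA : IsUnit A.det) :
    LC N J A B * LinvC N J A B = 1 := by
  have hAA : A * A⁻¹ = 1 := mul_nonsing_inv A hA
  have cancel : ∀ d : ℕ, A * ((A⁻¹ * B) ^ (d + 1) * A⁻¹) + (-B) * ((A⁻¹ * B) ^ d * A⁻¹) = 0 := by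
    intro d
    rw [pow_succ', Matrix.mul_assoc (A⁻¹ * B) _ _, ← Matrix.mul_assoc A (A⁻¹ * B) _,
      ← Matrix.mul_assoc A A⁻¹ B, hAA, Matrix.one_mul, Matrix.neg_mul, add_neg_cancel]
  ext ⟨i, x⟩ ⟨j, y⟩
  have hi1 : ((i : ℕ) - 1) < N := lt_of_le_of_lt (Nat.sub_le _ _) i.isLt
  rw [Matrix.mul_apply, Fintype.sum_prod_type]
  have step1 : ∀ k : Fin N, ∑ z : Fin J, LC N J A B (i, x) (k, z) * LinvC N J A B (k, z) (j, y)
      = (if i = k then (A * Blk N J A B k j) x y else 0)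
        + (if (i : ℕ) = (k : ℕ) + 1 then ((-B) * Blk N J A B k j) x y else 0) := by
    intro k
    by_cases h1 : i = k
    · simp only [LC, LinvC, Matrix.of_apply, h1, if_true, if_pos rfl]
      rw [if_neg (by omega), add_zero, Matrix.mul_apply]
    · by_cases h2 : (i : ℕ) = (k : ℕ) + 1
      · simp only [LC, LinvC, Matrix.of_apply, if_neg h1, if_pos h2, zero_add,
          Matrix.mul_apply, Matrix.neg_apply, neg_mul, Finset.sum_neg_distrib]
      · simp only [LC, LinvC, Matrix.of_apply, if_neg h1, if_neg h2, zero_mul, add_zero]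
        simp
  rw [Finset.sum_congr rfl fun k _ => step1 k, Finset.sum_add_distrib]
  rw [Finset.sum_ite_eq _ i (fun k => (A * Blk N J A B k j) x y), if_pos (Finset.mem_univ i)]
  have snd : (∑ k : Fin N, if (i : ℕ) = (k : ℕ) + 1
      then ((-B) * Blk N J A B k j) x y else 0)
      = if 0 < (i : ℕ) then ((-B) * Blk N J A B ⟨(i : ℕ) - 1, hi1⟩ j) x y else 0 := by
    split
    · next hi =>
      rw [Finset.sum_eq_single (⟨(i : ℕ) - 1, hi1⟩ : Fin N)]
      · rw [if_pos (by simp; omega)]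
      · intro b _ hb
        rw [if_neg (fun hc => hb (by apply Fin.ext; simp; omega))]
      · intro h; exact absurd (Finset.mem_univ _) h
    · next hi =>
      apply Finset.sum_eq_zero
      intro k _
      rw [if_neg (by omega)]
  rw [snd]
  by_cases hij : i = j
  · subst hij
    have hblk : Blk N J A B i i = A⁻¹ := by
      simp [Blk]
    rw [hblk, hAA]
    split
    · next hi =>
      have hz : Blk N J A B ⟨(i : ℕ) - 1, hi1⟩ i = 0 := by
        rw [Blk, if_neg (by simp; omega)]
      rw [hz, Matrix.mul_zero, Matrix.zero_apply, add_zero, Matrix.one_apply, Matrix.one_apply]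
      simp [Prod.ext_iff]
    · rw [add_zero, Matrix.one_apply, Matrix.one_apply]
      simp [Prod.ext_iff]
  · rw [Matrix.one_apply_ne (by simp [Prod.ext_iff]; tauto)]
    by_cases hlt : (i : ℕ) < (j : ℕ)
    · have hb1 : Blk N J A B i j = 0 := by rw [Blk, if_neg (by omega)]
      rw [hb1, Matrix.mul_zero, Matrix.zero_apply, zero_add]
      split
      · next hi =>
        have hz : Blk N J A B ⟨(i : ℕ) - 1, hi1⟩ j = 0 := by
          rw [Blk, if_neg (by simp; omega)]
        rw [hz, Matrix.mul_zero, Matrix.zero_apply]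
      · rfl
    · have hji : (j : ℕ) < (i : ℕ) := by
        rcases lt_or_ge (j : ℕ) (i : ℕ) with h | h
        · exact h
        · exact absurd (Fin.ext (by omega) : i = j) hij
      have hi : 0 < (i : ℕ) := by omega
      rw [if_pos hi]
      have hb1 : Blk N J A B i j = (A⁻¹ * B) ^ (((i : ℕ) - 1 - (j : ℕ)) + 1) * A⁻¹ := by
        rw [Blk, if_pos (by omega), show (i : ℕ) - (j : ℕ) = ((i : ℕ) - 1 - (j : ℕ)) + 1 by omega]
      have hb2 : Blk N J A B ⟨(i : ℕ) - 1, hi1⟩ j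
          = (A⁻¹ * B) ^ ((i : ℕ) - 1 - (j : ℕ)) * A⁻¹ := by
        rw [Blk, if_pos (by simp; omega)]
      rw [hb1, hb2, ← Matrix.add_apply, cancel, Matrix.zero_apply]

lemma isUnit_det_LC {N J : ℕ} (A B : Matrix (Fin J) (Fin J) ℂ) (hA : IsUnit A.det) :
    IsUnit (LC N J A B).det := by
  have h := congrArg Matrix.det (LC_mul_LinvC (N := N) A B hA)
  rw [det_mul, det_one] at h
  exact IsUnit.of_mul_eq_one _ h

lemma sandwichE {N J : ℕ} (i j : Fin N) (X : Matrix (Fin N × Fin J) (Fin N × Fin J) ℂ) :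
    (EC N J i)ᵀ * X * EC N J j = Matrix.of fun y z => X (i, y) (j, z) := by
  rw [ECt_mul, mul_EC']
  rfl

lemma EC_Linv_EC {N J : ℕ} (hN : 0 < N) (A B : Matrix (Fin J) (Fin J) ℂ) :
    (EC N J ⟨N - 1, Nat.sub_lt hN Nat.one_pos⟩)ᵀ * LinvC N J A B * EC N J ⟨0, hN⟩
      = (A⁻¹ * B) ^ (N - 1) * A⁻¹ := by
  rw [sandwichE]
  ext y z
  simp [LinvC, Blk]

lemma det_LC_sub {N J : ℕ} (hN : 0 < N) (A B : Matrix (Fin J) (Fin J) ℂ)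
    (hA : IsUnit A.det) (μ : ℂ) :
    (LC N J A B - μ • (EC N J ⟨0, hN⟩ * B * (EC N J ⟨N - 1, Nat.sub_lt hN Nat.one_pos⟩)ᵀ)).det
      = (LC N J A B).det * (1 - μ • ((A⁻¹ * B) ^ N)).det := by
  have h1 : LC N J A B * LinvC N J A B = 1 := LC_mul_LinvC A B hA
  set E0 := EC N J (⟨0, hN⟩ : Fin N)
  set EN := EC N J (⟨N - 1, Nat.sub_lt hN Nat.one_pos⟩ : Fin N)
  have hfac : LC N J A B - μ • (E0 * B * ENᵀ)
      = LC N J A B * (1 - μ • (LinvC N J A B * (E0 * B * ENᵀ))) := by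
    rw [Matrix.mul_sub, Matrix.mul_one, mul_smul_comm, ← Matrix.mul_assoc, h1, Matrix.one_mul]
  rw [hfac, det_mul]
  congr 1
  have h2 : (1 : Matrix (Fin N × Fin J) (Fin N × Fin J) ℂ)
        - μ • (LinvC N J A B * (E0 * B * ENᵀ))
      = 1 + ((-μ) • (LinvC N J A B * (E0 * B))) * ENᵀ := by
    rw [Matrix.smul_mul, neg_smul, ← sub_eq_add_neg, Matrix.mul_assoc,
      Matrix.mul_assoc (LinvC N J A B) (E0 * B) ENᵀ, Matrix.mul_assoc E0 B ENᵀ]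
  rw [h2, det_one_add_mul_comm]
  congr 1
  rw [Matrix.mul_smul, neg_smul, ← sub_eq_add_neg]
  congr 1
  have hNs : N - 1 + 1 = N := by omega
  rw [← Matrix.mul_assoc, ← Matrix.mul_assoc, EC_Linv_EC hN A B, Matrix.mul_assoc,
    ← pow_succ, hNs]

lemma mem_spec_iff {n : Type} [Fintype n] [DecidableEq n] (T : Matrix n n ℂ) (z : ℂ) :
    z ∈ spectrum ℂ T ↔ (z • (1 : Matrix n n ℂ) - T).det = 0 := by
  rw [spectrum.mem_iff, Matrix.isUnit_iff_isUnit_det, isUnit_iff_ne_zero, not_not,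
    Algebra.algebraMap_eq_smul_one]

end Stmt9



/-- For `N ≥ 2` and every `ε ∈ (0,1]`, the spectrum (over `ℂ`)
of `P_ε⁻¹ L` equals `{1} ∪ σ(I_J + ε ((M⁻¹A₀)^N − ε I_J)⁻¹)`. -/
theorem statement9 (N J : ℕ) (hN : 0 < N) (hN2 : 2 ≤ N) (hJ : 0 < J)
    (τ : ℝ) (hτ : 0 < τ)
    (M K : Matrix (Fin J) (Fin J) ℝ) (hM : M.PosDef) (hK : K.PosDef)
    (A₀ : Matrix (Fin J) (Fin J) ℝ) (hA₀ : A₀ = M + τ • K)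
    (ε : ℝ) (hε0 : 0 < ε) (hε1 : ε ≤ 1)
    (G : Matrix (Fin J) (Fin J) ℝ)
    (hG : G = 1 + ε • ((M⁻¹ * A₀) ^ N - ε • (1 : Matrix (Fin J) (Fin J) ℝ))⁻¹) :
    spectrum ℂ (((Pmat N J hN A₀ M ε)⁻¹ * Lmat N J A₀ M).map Complex.ofReal) =
      {1} ∪ spectrum ℂ (G.map Complex.ofReal) := by
  classical
  -- real-side facts
  have hA₀pd : A₀.PosDef := by rw [hA₀]; exact hM.add (myPosDef_smul hK hτ)
  have hMdet : IsUnit M.det := hM.det_pos.ne'.isUnit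
  have hbig := bigPosDef N hN τ hτ M K hM hK A₀ hA₀ ε hε0 hε1
  have hXr : M * ((M⁻¹ * A₀) ^ N - ε • (1 : Matrix (Fin J) (Fin J) ℝ))
      = M * (M⁻¹ * A₀) ^ N - ε • M := by
    rw [Matrix.mul_sub, mul_smul_comm, Matrix.mul_one]
  have hdetSNr : ((M⁻¹ * A₀) ^ N - ε • (1 : Matrix (Fin J) (Fin J) ℝ)).det ≠ 0 := by
    intro h
    have h2 := hbig.det_pos
    rw [← hXr, det_mul, h, mul_zero] at h2
    exact lt_irrefl _ h2
  have hSdetR : (M⁻¹ * A₀).det ≠ 0 := by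
    rw [det_mul, det_nonsing_inv, Ring.inverse_eq_inv]
    exact mul_ne_zero (inv_ne_zero hM.det_pos.ne') hA₀pd.det_pos.ne'
  -- complex matrices
  set a : Matrix (Fin J) (Fin J) ℂ := A₀.map Complex.ofReal with ha
  set m : Matrix (Fin J) (Fin J) ℂ := M.map Complex.ofReal with hm
  have hadet : IsUnit a.det := by
    rw [ha, cmap_det]
    exact isUnit_iff_ne_zero.2 (Complex.ofReal_ne_zero.2 hA₀pd.det_pos.ne')
  have hmdet : IsUnit m.det := by
    rw [hm, cmap_det]
    exact isUnit_iff_ne_zero.2 (Complex.ofReal_ne_zero.2 hM.det_pos.ne')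
  have hmapMA : (M⁻¹ * A₀).map Complex.ofReal = m⁻¹ * a := by
    rw [cmap_mul, cmap_inv M hMdet, ← ha, ← hm]
  set s : Matrix (Fin J) (Fin J) ℂ := m⁻¹ * a with hs
  have hmapSN : ∀ k : ℕ, ((M⁻¹ * A₀) ^ k).map Complex.ofReal = s ^ k := fun k => by
    rw [cmap_pow, hmapMA]
  have hsNdet : IsUnit ((s ^ N).det) := by
    rw [← hmapSN N, cmap_det]
    refine isUnit_iff_ne_zero.2 (Complex.ofReal_ne_zero.2 ?_)
    rw [det_pow]
    exact pow_ne_zero _ hSdetR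
  set W : Matrix (Fin J) (Fin J) ℂ := s ^ N - (ε : ℂ) • 1 with hW
  have hmapW : (((M⁻¹ * A₀) ^ N - ε • (1 : Matrix (Fin J) (Fin J) ℝ))).map Complex.ofReal
      = W := by
    rw [cmap_sub, hmapSN, cmap_smul, cmap_one, hW]
  have hWdet : IsUnit W.det := by
    rw [← hmapW, cmap_det]
    exact isUnit_iff_ne_zero.2 (Complex.ofReal_ne_zero.2 hdetSNr)
  have hWW : W⁻¹ * W = 1 := nonsing_inv_mul _ hWdet
  have hGc : G.map Complex.ofReal = 1 + (ε : ℂ) • W⁻¹ := by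
    rw [hG, cmap_add, cmap_one, cmap_smul,
      cmap_inv _ (isUnit_iff_ne_zero.2 hdetSNr), hmapW]
  -- big complex matrices
  set X0 : Matrix (Fin N × Fin J) (Fin N × Fin J) ℂ :=
    Stmt9.EC N J ⟨0, hN⟩ * m * (Stmt9.EC N J ⟨N - 1, Nat.sub_lt hN Nat.one_pos⟩)ᵀ with hX0
  set Lc : Matrix (Fin N × Fin J) (Fin N × Fin J) ℂ := Stmt9.LC N J a m with hLc
  set Pc : Matrix (Fin N × Fin J) (Fin N × Fin J) ℂ := Lc - (ε : ℂ) • X0 with hPc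
  have hmapL : (Lmat N J A₀ M).map Complex.ofReal = Lc := by
    rw [Stmt9.map_Lmat, ← ha, ← hm, hLc]
  have hmapP : (Pmat N J hN A₀ M ε).map Complex.ofReal = Pc := by
    simp only [Pmat]
    rw [cmap_sub, hmapL, cmap_smul, cmap_mul, cmap_mul, cmap_transpose,
      Stmt9.map_Emat, Stmt9.map_Emat, ← hm, hPc, hX0]
  have hLcdet : IsUnit Lc.det := by rw [hLc]; exact Stmt9.isUnit_det_LC a m hadet
  -- T := a⁻¹ * m and its powers
  have hsT : s * (a⁻¹ * m) = 1 := by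
    rw [hs, Matrix.mul_assoc, ← Matrix.mul_assoc a a⁻¹ m,
      mul_nonsing_inv _ hadet, Matrix.one_mul, nonsing_inv_mul _ hmdet]
  have hpow : ∀ k : ℕ, s ^ k * (a⁻¹ * m) ^ k = 1 := by
    intro k
    induction k with
    | zero => simp
    | succ k ih =>
      rw [pow_succ, pow_succ', Matrix.mul_assoc (s ^ k) s ((a⁻¹ * m) * (a⁻¹ * m) ^ k),
        ← Matrix.mul_assoc s (a⁻¹ * m) ((a⁻¹ * m) ^ k), hsT, Matrix.one_mul, ih]
  have hTN : (a⁻¹ * m) ^ N = (s ^ N)⁻¹ := (inv_eq_right_inv (hpow N)).symm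
  have hsNinvdet : ((s ^ N)⁻¹).det ≠ 0 := by
    rw [det_nonsing_inv, Ring.inverse_eq_inv]
    exact inv_ne_zero hsNdet.ne_zero
  -- determinant factorization, generic μ
  have hdetP : ∀ μ : ℂ, (Lc - μ • X0).det
      = Lc.det * ((s ^ N - μ • 1).det * ((s ^ N)⁻¹).det) := by
    intro μ
    rw [hLc, hX0, Stmt9.det_LC_sub hN a m hadet μ]
    congr 1
    have h1 : (s ^ N - μ • 1) * (s ^ N)⁻¹ = 1 - μ • (a⁻¹ * m) ^ N := by
      rw [Matrix.sub_mul, mul_nonsing_inv _ hsNdet, Matrix.smul_mul, Matrix.one_mul,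
        ← hTN]
    rw [← det_mul, h1]
  have hPcdet : Pc.det ≠ 0 := by
    rw [hPc, hdetP (ε : ℂ)]
    refine mul_ne_zero hLcdet.ne_zero (mul_ne_zero ?_ hsNinvdet)
    rw [← hW]
    exact hWdet.ne_zero
  -- corner block has zero determinant
  have hdetX0 : X0.det = 0 := by
    apply Matrix.det_eq_zero_of_column_eq_zero (⟨⟨0, hN⟩, ⟨0, hJ⟩⟩ : Fin N × Fin J)
    intro p
    rw [hX0, Matrix.mul_apply]
    apply Finset.sum_eq_zero
    intro y _
    have hz : (Stmt9.EC N J ⟨N - 1, Nat.sub_lt hN Nat.one_pos⟩)ᵀ y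
        ((⟨⟨0, hN⟩, ⟨0, hJ⟩⟩ : Fin N × Fin J)) = 0 := by
      simp only [Stmt9.EC, Matrix.transpose_apply, Matrix.of_apply, ite_eq_right_iff, and_imp]
      intro h1 h2
      exfalso
      have h3 : (0 : ℕ) = N - 1 := congrArg Fin.val h1
      omega
    rw [hz, mul_zero]
  have hF1 : ((1 : ℂ) • Pc - Lc).det = 0 := by
    have h1 : (1 : ℂ) • Pc - Lc = (-(ε : ℂ)) • X0 := by
      rw [hPc]; module
    rw [h1, det_smul, hdetX0, mul_zero]
  -- rewrite the matrix in the statement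
  have hmapPL : ((Pmat N J hN A₀ M ε)⁻¹ * Lmat N J A₀ M).map Complex.ofReal
      = Pc⁻¹ * Lc := by
    have hPrdet : IsUnit (Pmat N J hN A₀ M ε).det := by
      refine isUnit_iff_ne_zero.2 (fun h0 => hPcdet ?_)
      rw [← hmapP, cmap_det, h0, Complex.ofReal_zero]
    rw [cmap_mul, cmap_inv _ hPrdet, hmapP, hmapL]
  have hPciu : IsUnit Pc.det := isUnit_iff_ne_zero.2 hPcdet
  have hPiff : ∀ z : ℂ, z ∈ spectrum ℂ (Pc⁻¹ * Lc) ↔ (z • Pc - Lc).det = 0 := by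
    intro z
    rw [Stmt9.mem_spec_iff]
    have hfac2 : z • Pc - Lc = Pc * (z • 1 - Pc⁻¹ * Lc) := by
      rw [Matrix.mul_sub, mul_smul_comm, Matrix.mul_one, ← Matrix.mul_assoc,
        mul_nonsing_inv _ hPciu, Matrix.one_mul]
    rw [hfac2, det_mul]
    constructor
    · intro h
      rw [h, mul_zero]
    · intro h
      rcases mul_eq_zero.1 h with h | h
      · exact absurd h hPcdet
      · exact h
  have hGiff : ∀ z : ℂ, z ∈ spectrum ℂ (G.map Complex.ofReal)
      ↔ ((z - 1) • s ^ N - (z * (ε : ℂ)) • 1).det = 0 := by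
    intro z
    rw [Stmt9.mem_spec_iff, hGc]
    have hprod : (z • 1 - (1 + (ε : ℂ) • W⁻¹)) * W
        = (z - 1) • s ^ N - (z * (ε : ℂ)) • 1 := by
      rw [Matrix.sub_mul, Matrix.add_mul, Matrix.smul_mul, Matrix.smul_mul,
        Matrix.one_mul, hWW, hW]
      module
    have hdd : (z • 1 - (1 + (ε : ℂ) • W⁻¹)).det * W.det
        = ((z - 1) • s ^ N - (z * (ε : ℂ)) • 1).det := by
      rw [← det_mul, hprod]
    constructor
    · intro h
      rw [← hdd, h, zero_mul]
    · intro h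
      rcases mul_eq_zero.1 (hdd.trans h) with h' | h'
      · exact h'
      · exact absurd h' hWdet.ne_zero
  have hFiff : ∀ z : ℂ, z ≠ 1 → ((z • Pc - Lc).det = 0
      ↔ ((z - 1) • s ^ N - (z * (ε : ℂ)) • 1).det = 0) := by
    intro z hz
    have hz1 : z - 1 ≠ 0 := sub_ne_zero.2 hz
    have hμ : (z - 1) * (z * (ε : ℂ) / (z - 1)) = z * (ε : ℂ) := by
      field_simp
    have h1 : z • Pc - Lc = (z - 1) • Lc - (z * (ε : ℂ)) • X0 := by
      rw [hPc]; module
    have h2 : (z - 1) • (Lc - (z * (ε : ℂ) / (z - 1)) • X0)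
        = (z - 1) • Lc - (z * (ε : ℂ)) • X0 := by
      rw [smul_sub, smul_smul, hμ]
    have h3 : (z - 1) • (s ^ N - (z * (ε : ℂ) / (z - 1)) • 1)
        = (z - 1) • s ^ N - (z * (ε : ℂ)) • 1 := by
      rw [smul_sub, smul_smul, hμ]
    rw [h1, ← h2, ← h3, det_smul, det_smul, hdetP (z * (ε : ℂ) / (z - 1))]
    constructor
    · intro h
      rcases mul_eq_zero.1 h with h' | h'
      · exact absurd h' (pow_ne_zero _ hz1)
      · rcases mul_eq_zero.1 h' with h'' | h''
        · exact absurd h'' hLcdet.ne_zero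
        · rcases mul_eq_zero.1 h'' with h3' | h3'
          · rw [h3', mul_zero]
          · exact absurd h3' hsNinvdet
    · intro h
      rcases mul_eq_zero.1 h with h' | h'
      · exact absurd h' (pow_ne_zero _ hz1)
      · rw [h']
        ring
  -- conclude
  rw [hmapPL]
  ext z
  simp only [Set.mem_union, Set.mem_singleton_iff]
  rw [hPiff z, hGiff z]
  constructor
  · intro h
    by_cases hz : z = 1
    · exact Or.inl hz
    · exact Or.inr ((hFiff z hz).1 h)
  · rintro (rfl | hD)
    · exact hF1
    · by_cases hz : z = 1
      · subst hz; exact hF1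
      · exact (hFiff z hz).2 hD
end

section
/- For every ε ∈ (0,1], there exist an invertible matrix V ∈ ℝ^{J×J} and a diagonal matrix D ∈ ℝ^{J×J} such that I_J + (A₀⁻¹M)^{N−1}A₀⁻¹Z_ε⁻¹ = V D V⁻¹ and every diagonal entry of D is strictly greater than 1 (in particular 1 is not an eigenvalue of D). -/
open Matrix

variable {n : Type*} [Fintype n] [DecidableEq n]

omit [DecidableEq n] in
lemma myPosDef_smul_s11 {c : ℝ} (hc : 0 < c) {A : Matrix n n ℝ} (hA : A.PosDef) :
    (c • A).PosDef := by
  refine Matrix.PosDef.of_dotProduct_mulVec_pos (by simpa [Matrix.IsHermitian] using congrArg (c • ·) hA.1) fun x hx => ?_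
  have := hA.dotProduct_mulVec_pos hx
  simp only [smul_mulVec, dotProduct_smul, smul_eq_mul]
  positivity

lemma myPosDef_conj_s11 {A B : Matrix n n ℝ} (hA : A.PosDef) (hB : IsUnit B) :
    (Bᴴ * A * B).PosDef := by
  refine Matrix.PosDef.of_dotProduct_mulVec_pos (Matrix.isHermitian_conjTranspose_mul_mul B hA.1) fun x hx => ?_
  have hinj := Matrix.mulVec_injective_iff_isUnit.mpr hB
  have hx' : B *ᵥ x ≠ 0 := fun h => hx (hinj (by simpa using h))
  simpa only [star_mulVec, dotProduct_mulVec, vecMul_vecMul] using hA.dotProduct_mulVec_pos hx'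

lemma myPosDef_conj' {A B : Matrix n n ℝ} (hA : A.PosDef) (hB : IsUnit B) :
    (B * A * Bᴴ).PosDef := by
  have hB' : IsUnit Bᴴ := by
    rw [Matrix.isUnit_iff_isUnit_det, Matrix.det_conjTranspose]
    exact (Matrix.isUnit_iff_isUnit_det B |>.mp hB).star
  simpa only [conjTranspose_conjTranspose] using myPosDef_conj_s11 hA hB'

lemma myConj_pow {P A Q : Matrix n n ℝ} (h1 : P * Q = 1) (h2 : Q * P = 1) (k : ℕ) :
    (P * A * Q) ^ k = P * A ^ k * Q := by
  induction k with
  | zero => simpa using h1.symm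
  | succ k ih =>
      rw [pow_succ, ih, pow_succ]
      have : P * A ^ k * Q * (P * A * Q) = P * A ^ k * (Q * P) * (A * Q) := by
        simp only [mul_assoc]
      rw [this, h2, mul_one]
      simp only [mul_assoc]

/-- For every `ε ∈ (0,1]`, there exist an invertible matrix
`V ∈ ℝ^{J×J}` and a diagonal matrix `D ∈ ℝ^{J×J}` with
`I_J + (A₀⁻¹M)^(N−1) A₀⁻¹ Z_ε⁻¹ = V D V⁻¹` and every diagonal entry of `D`
strictly greater than `1` (in particular `1` is not an eigenvalue of `D`). -/
theorem statement11 (J N : ℕ) (hJ : 0 < J) (hN : 0 < N) (τ : ℝ) (hτ : 0 < τ)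
    (M K : Matrix (Fin J) (Fin J) ℝ) (hM : M.PosDef) (hK : K.PosDef)
    (A₀ : Matrix (Fin J) (Fin J) ℝ) (hA₀ : A₀ = M + τ • K)
    (ε : ℝ) (hε0 : 0 < ε) (hε1 : ε ≤ 1)
    (Zε : Matrix (Fin J) (Fin J) ℝ)
    (hZε : Zε = ε⁻¹ • ((1 - ε • (A₀⁻¹ * M) ^ N) * M⁻¹)) :
    ∃ V D : Matrix (Fin J) (Fin J) ℝ,
      IsUnit V ∧ D.IsDiag ∧
      1 + (A₀⁻¹ * M) ^ (N - 1) * A₀⁻¹ * Zε⁻¹ = V * D * V⁻¹ ∧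
      ∀ i : Fin J, 1 < D i i := by
  classical
  have hτK : (τ • K).PosDef := myPosDef_smul_s11 hτ hK
  have hA₀pd : A₀.PosDef := hA₀ ▸ hM.add hτK
  have hA₀u : IsUnit A₀ := hA₀pd.isUnit
  have hMu : IsUnit M := hM.isUnit
  -- square root of M
  set R : Matrix (Fin J) (Fin J) ℝ := (open scoped MatrixOrder in CFC.sqrt M) with hRdef
  have hRR : R * R = M := open scoped MatrixOrder in CFC.sqrt_mul_sqrt_self M (Matrix.nonneg_iff_posSemidef.mpr hM.posSemidef)
  have hRherm : Rᴴ = R := open scoped MatrixOrder in (Matrix.nonneg_iff_posSemidef.mp (CFC.sqrt_nonneg M)).1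
  have hRu : IsUnit R := by
    rw [Matrix.isUnit_iff_isUnit_det]
    have : R.det * R.det = M.det := by rw [← Matrix.det_mul, hRR]
    have hMdet := hM.det_pos
    have : R.det ≠ 0 := fun h => by simp [h] at this; exact hMdet.ne' this.symm
    exact this.isUnit
  have hRiu : IsUnit R⁻¹ := Matrix.isUnit_nonsing_inv_iff.mpr hRu
  have hRRi : R * R⁻¹ = 1 := Matrix.mul_nonsing_inv R ((Matrix.isUnit_iff_isUnit_det R).mp hRu)
  have hRiR : R⁻¹ * R = 1 := Matrix.nonsing_inv_mul R ((Matrix.isUnit_iff_isUnit_det R).mp hRu)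
  have hRiherm : (R⁻¹)ᴴ = R⁻¹ := by rw [Matrix.conjTranspose_nonsing_inv, hRherm]
  -- T := R⁻¹ A₀ R⁻¹, positive definite with eigenvalues > 1
  set T : Matrix (Fin J) (Fin J) ℝ := R⁻¹ * A₀ * R⁻¹ with hTdef
  have hTpd : T.PosDef := by
    have := myPosDef_conj_s11 hA₀pd hRiu
    rwa [hRiherm] at this
  have hT1 : (T - 1).PosDef := by
    have h1 : T - 1 = R⁻¹ * (τ • K) * R⁻¹ := by
      rw [hTdef, hA₀, Matrix.mul_add, Matrix.add_mul]
      have : R⁻¹ * M * R⁻¹ = 1 := by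
        rw [← hRR, show R⁻¹ * (R * R) * R⁻¹ = (R⁻¹ * R) * (R * R⁻¹) by
          simp only [mul_assoc], hRiR, hRRi, one_mul]
      rw [this]; abel
    rw [h1]
    have := myPosDef_conj_s11 hτK hRiu
    rwa [hRiherm] at this
  set ν : Fin J → ℝ := hTpd.1.eigenvalues with hνdef
  set U : Matrix (Fin J) (Fin J) ℝ := (Matrix.IsHermitian.eigenvectorUnitary hTpd.1 : Matrix (Fin J) (Fin J) ℝ) with hUdef
  have hUU : U * star U = 1 :=
    Matrix.mem_unitaryGroup_iff.mp (Matrix.IsHermitian.eigenvectorUnitary hTpd.1).2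
  have hUU' : star U * U = 1 :=
    Matrix.mem_unitaryGroup_iff'.mp (Matrix.IsHermitian.eigenvectorUnitary hTpd.1).2
  have hUu : IsUnit U :=
    (Matrix.isUnit_iff_isUnit_det U).mpr (Matrix.isUnit_det_of_right_inverse hUU)
  have hspec : T = U * Matrix.diagonal ν * star U := by
    have := hTpd.1.spectral_theorem
    simpa using this
  have hdiag : star U * T * U = Matrix.diagonal ν := by
    rw [hspec]
    calc star U * (U * Matrix.diagonal ν * star U) * U
        = (star U * U) * Matrix.diagonal ν * (star U * U) := by simp only [mul_assoc]
      _ = Matrix.diagonal ν := by rw [hUU']; simp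
  have hν1 : ∀ i, 1 < ν i := by
    have hpd : (star U * (T - 1) * U).PosDef := by
      have := myPosDef_conj_s11 hT1 hUu
      rwa [show Uᴴ = star U from rfl] at this
    have heq : star U * (T - 1) * U = Matrix.diagonal (fun i => ν i - 1) := by
      rw [Matrix.mul_sub, Matrix.sub_mul, mul_one, hdiag, hUU']
      ext i j
      by_cases h : i = j <;> simp [Matrix.diagonal, h, Matrix.one_apply]
    rw [heq, Matrix.posDef_diagonal_iff] at hpd
    intro i; linarith [hpd i]
  have hν0 : ∀ i, 0 < ν i := fun i => lt_trans one_pos (hν1 i)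
  -- V and the diagonalization of B = A₀⁻¹ M
  set V : Matrix (Fin J) (Fin J) ℝ := R⁻¹ * U with hVdef
  have hVu : IsUnit V := hRiu.mul hUu
  have hVinv : V⁻¹ = star U * R := by
    apply Matrix.inv_eq_left_inv
    rw [hVdef]
    calc star U * R * (R⁻¹ * U) = star U * (R * R⁻¹) * U := by simp only [mul_assoc]
      _ = 1 := by rw [hRRi, mul_one, hUU']
  have hVVi : V * V⁻¹ = 1 := Matrix.mul_nonsing_inv V ((Matrix.isUnit_iff_isUnit_det V).mp hVu)
  have hViV : V⁻¹ * V = 1 := Matrix.nonsing_inv_mul V ((Matrix.isUnit_iff_isUnit_det V).mp hVu)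
  have hTinv : T⁻¹ = R * A₀⁻¹ * R := by
    apply Matrix.inv_eq_right_inv
    calc (R⁻¹ * A₀ * R⁻¹) * (R * A₀⁻¹ * R)
        = R⁻¹ * (A₀ * ((R⁻¹ * R) * A₀⁻¹)) * R := by simp only [mul_assoc]
      _ = 1 := by rw [hRiR, one_mul, Matrix.mul_nonsing_inv A₀ ((Matrix.isUnit_iff_isUnit_det A₀).mp hA₀u), mul_one, hRiR]
  have hTinv2 : T⁻¹ = U * Matrix.diagonal (fun i => (ν i)⁻¹) * star U := by
    apply Matrix.inv_eq_right_inv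
    rw [hspec]
    calc U * Matrix.diagonal ν * star U * (U * Matrix.diagonal (fun i => (ν i)⁻¹) * star U)
        = U * (Matrix.diagonal ν * ((star U * U) * Matrix.diagonal (fun i => (ν i)⁻¹))) * star U := by
          simp only [mul_assoc]
      _ = 1 := by
          rw [hUU', one_mul, Matrix.diagonal_mul_diagonal]
          have : (fun i => ν i * (ν i)⁻¹) = fun _ => (1 : ℝ) := by
            funext i; exact mul_inv_cancel₀ (hν0 i).ne'
          rw [this, Matrix.diagonal_one, mul_one, hUU]
  have hB : A₀⁻¹ * M = V * Matrix.diagonal (fun i => (ν i)⁻¹) * V⁻¹ := by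
    symm
    rw [hVdef, hVinv]
    have h1 : R⁻¹ * U * Matrix.diagonal (fun i => (ν i)⁻¹) * (star U * R)
        = R⁻¹ * (U * Matrix.diagonal (fun i => (ν i)⁻¹) * star U) * R := by
      simp only [mul_assoc]
    rw [h1, ← hTinv2, hTinv]
    calc R⁻¹ * (R * A₀⁻¹ * R) * R = (R⁻¹ * R) * A₀⁻¹ * (R * R) := by simp only [mul_assoc]
      _ = A₀⁻¹ * M := by rw [hRiR, one_mul, hRR]
  have hBpow : ∀ k : ℕ, (A₀⁻¹ * M) ^ k = V * Matrix.diagonal (fun i => ((ν i)⁻¹) ^ k) * V⁻¹ := by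
    intro k
    rw [hB, myConj_pow hVVi hViV, Matrix.diagonal_pow]
    rfl
  set d : Fin J → ℝ := fun i => 1 - ε * ((ν i)⁻¹) ^ N with hddef
  have hdaux : ∀ i, 0 < ((ν i)⁻¹) ^ N ∧ ((ν i)⁻¹) ^ N < 1 := by
    intro i
    have h2 : 0 < (ν i)⁻¹ := inv_pos.mpr (hν0 i)
    have h1 : (ν i)⁻¹ < 1 := by
      rw [inv_lt_one_iff₀]; right; exact hν1 i
    exact ⟨pow_pos h2 N, pow_lt_one₀ h2.le h1 hN.ne'⟩
  have hd0 : ∀ i, 0 < d i := by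
    intro i
    obtain ⟨h4, h3⟩ := hdaux i
    simp only [hddef]
    nlinarith
  have hd1 : ∀ i, d i < 1 := by
    intro i
    obtain ⟨h4, h3⟩ := hdaux i
    simp only [hddef]
    nlinarith
  set G := 1 - ε • (A₀⁻¹ * M) ^ N with hGdef
  have hG : G = V * Matrix.diagonal d * V⁻¹ := by
    rw [hGdef, hBpow N]
    have hdd : Matrix.diagonal d = 1 - ε • Matrix.diagonal (fun i => ((ν i)⁻¹) ^ N) := by
      ext i j
      by_cases h : i = j <;> simp [hddef, Matrix.diagonal, h, Matrix.one_apply]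
    rw [hdd, Matrix.mul_sub, Matrix.sub_mul, Matrix.mul_smul, Matrix.smul_mul, mul_one, hVVi]
  have hGu : IsUnit G := by
    rw [hG]
    refine (hVu.mul (Matrix.isUnit_diagonal.mpr ?_)).mul (Matrix.isUnit_nonsing_inv_iff.mpr hVu)
    exact ⟨⟨d, fun i => (d i)⁻¹,
      funext fun i => mul_inv_cancel₀ (hd0 i).ne',
      funext fun i => inv_mul_cancel₀ (hd0 i).ne'⟩, rfl⟩
  have hGinv : G⁻¹ = V * Matrix.diagonal (fun i => (d i)⁻¹) * V⁻¹ := by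
    apply Matrix.inv_eq_right_inv
    rw [hG]
    calc (V * Matrix.diagonal d * V⁻¹) * (V * Matrix.diagonal (fun i => (d i)⁻¹) * V⁻¹)
        = V * (Matrix.diagonal d * ((V⁻¹ * V) * Matrix.diagonal (fun i => (d i)⁻¹))) * V⁻¹ := by
          simp only [mul_assoc]
      _ = 1 := by
          rw [hViV, one_mul, Matrix.diagonal_mul_diagonal]
          have h5 : (fun i => d i * (d i)⁻¹) = fun _ => (1:ℝ) :=
            funext fun i => mul_inv_cancel₀ (hd0 i).ne'
          rw [h5, Matrix.diagonal_one, mul_one, hVVi]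
  have hGGi : G * G⁻¹ = 1 := Matrix.mul_nonsing_inv G ((Matrix.isUnit_iff_isUnit_det G).mp hGu)
  have hZinv : Zε⁻¹ = ε • (M * G⁻¹) := by
    apply Matrix.inv_eq_right_inv
    rw [hZε, Matrix.smul_mul, Matrix.mul_smul, smul_smul, inv_mul_cancel₀ hε0.ne', one_smul]
    calc G * M⁻¹ * (M * G⁻¹) = G * (M⁻¹ * M) * G⁻¹ := by simp only [mul_assoc]
      _ = 1 := by rw [Matrix.nonsing_inv_mul M ((Matrix.isUnit_iff_isUnit_det M).mp hMu), mul_one, hGGi]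
  refine ⟨V, Matrix.diagonal (fun i => (d i)⁻¹), hVu, Matrix.isDiag_diagonal _, ?_, ?_⟩
  · rw [← hGinv, hZinv]
    have hpow : (A₀⁻¹ * M) ^ (N - 1) * (A₀⁻¹ * M) = (A₀⁻¹ * M) ^ N := by
      rw [← pow_succ, Nat.sub_add_cancel hN]
    have h6 : (A₀⁻¹ * M) ^ (N - 1) * A₀⁻¹ * (ε • (M * G⁻¹))
        = ε • ((A₀⁻¹ * M) ^ N * G⁻¹) := by
      rw [Matrix.mul_smul, ← hpow]
      congr 1
      simp only [mul_assoc]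
    rw [h6]
    have hexp : (1 - ε • (A₀⁻¹ * M) ^ N) * G⁻¹ = 1 := hGdef ▸ hGGi
    rw [Matrix.sub_mul, one_mul, Matrix.smul_mul] at hexp
    rw [← hexp]
    abel
  · intro i
    simp only [Matrix.diagonal_apply_eq]
    exact (one_lt_inv₀ (hd0 i)).mpr (hd1 i)
end
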